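/- (Simplified Davis–Kahan tangent theorem.) Let A ∈ ℝ^{r×r} be symmetric, [X Y] orthogonal with X ∈ ℝ^{r×p} such that Range(X) is an invariant subspace of A. Let X̃ ∈ ℝ^{r×p} have orthonormal columns, and define the residual R = A X̃ − X̃ X̃ᵀ A X̃. Suppose the eigenvalues of X̃ᵀ A X̃ lie in [α, β], and there exists δ > 0 such that the eigenvalues of Yᵀ A Y all lie in (−∞, α − δ] or all lie in [β + δ, ∞). Then ‖tan Θ(Range(X), Range(X̃))‖₂ ≤ ‖R‖₂ / δ. -/

import Mathlib

open scoped BigOperators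
open Matrix


noncomputable def frobNorm {r s : ℕ} (M : Matrix (Fin r) (Fin s) ℝ) : ℝ :=
  Real.sqrt (∑ i, ∑ j, M i j ^ 2)

noncomputable def specNorm {r s : ℕ} (M : Matrix (Fin r) (Fin s) ℝ) : ℝ :=
  sSup {c : ℝ | ∃ x : Fin s → ℝ, (∑ j, x j ^ 2) = 1 ∧
    c = Real.sqrt (∑ i, (M.mulVec x i) ^ 2)}

/-- `σ` enumerates the singular values of `M` in nonincreasing order,
    padded with zeros beyond index `s`. -/
def IsSingularValues {r s : ℕ} (M : Matrix (Fin r) (Fin s) ℝ) (σ : ℕ → ℝ) : Prop :=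
  Antitone σ ∧ (∀ i, 0 ≤ σ i) ∧ (∀ i, s ≤ i → σ i = 0) ∧
  ∀ hH : (Mᵀ * M).IsHermitian,
    Multiset.map (fun i : Fin s => σ (i : ℕ) ^ 2) Finset.univ.val
      = Multiset.map hH.eigenvalues Finset.univ.val

section Helpers

lemma dp_mul {m n k : Type*} [Fintype m] [Fintype n] [Fintype k]
    {M : Matrix m n ℝ} {N : Matrix m k ℝ} (u : n → ℝ) (v : k → ℝ) :
    (M *ᵥ u) ⬝ᵥ (N *ᵥ v) = u ⬝ᵥ ((Mᵀ * N) *ᵥ v) := by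
  rw [← mulVec_mulVec, ← vecMul_transpose, ← dotProduct_mulVec]

lemma dp_transpose {m n : Type*} [Fintype m] [Fintype n]
    {M : Matrix m n ℝ} (u : n → ℝ) (w : m → ℝ) :
    u ⬝ᵥ (Mᵀ *ᵥ w) = (M *ᵥ u) ⬝ᵥ w := by
  rw [dotProduct_mulVec, vecMul_transpose]

lemma dp_self_nonneg {n : Type*} [Fintype n] (u : n → ℝ) : 0 ≤ u ⬝ᵥ u :=
  Finset.sum_nonneg fun _ _ => mul_self_nonneg _

lemma dp_cs {n : Type*} [Fintype n] (u v : n → ℝ) :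
    |u ⬝ᵥ v| ≤ Real.sqrt (u ⬝ᵥ u) * Real.sqrt (v ⬝ᵥ v) := by
  have h := Finset.sum_mul_sq_le_sq_mul_sq Finset.univ u v
  have h2 : (u ⬝ᵥ v)^2 ≤ (u ⬝ᵥ u) * (v ⬝ᵥ v) := by
    simpa [dotProduct, sq] using h
  calc |u ⬝ᵥ v| = Real.sqrt ((u ⬝ᵥ v)^2) := (Real.sqrt_sq_eq_abs _).symm
    _ ≤ Real.sqrt ((u ⬝ᵥ u) * (v ⬝ᵥ v)) := Real.sqrt_le_sqrt h2
    _ = _ := Real.sqrt_mul (dp_self_nonneg u) _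

lemma rayleigh {n : Type*} [Fintype n] [DecidableEq n]
    (P : Matrix n n ℝ) (hP : P.IsHermitian) (x : n → ℝ) :
    ∃ w : n → ℝ, (∀ i, 0 ≤ w i) ∧ (∑ i, w i = x ⬝ᵥ x) ∧
      x ⬝ᵥ P *ᵥ x = ∑ i, hP.eigenvalues i * w i := by
  set U : Matrix n n ℝ := (hP.eigenvectorUnitary : Matrix n n ℝ) with hU
  have hUstar' : U * Uᵀ = 1 := by
    have := Unitary.coe_mul_star_self hP.eigenvectorUnitary
    simpa [star_eq_conjTranspose, conjTranspose_eq_transpose_of_trivial] using this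
  set y : n → ℝ := Uᵀ *ᵥ x with hy
  refine ⟨fun i => y i ^ 2, fun i => sq_nonneg _, ?_, ?_⟩
  · have h1 : (∑ i, y i ^ 2) = y ⬝ᵥ y := by simp [dotProduct, sq]
    rw [h1, hy, dp_mul, transpose_transpose, hUstar', one_mulVec]
  · have hPeq : P = U * diagonal hP.eigenvalues * Uᵀ := by
      simpa [star_eq_conjTranspose, conjTranspose_eq_transpose_of_trivial,
        Function.comp] using hP.spectral_theorem
    conv_lhs => rw [hPeq]
    rw [← mulVec_mulVec, ← mulVec_mulVec, dotProduct_mulVec, ← mulVec_transpose, ← hy]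
    simp only [dotProduct, mulVec_diagonal]
    exact Finset.sum_congr rfl fun i _ => by ring

lemma exists_eigvec {n : Type*} [Fintype n] [DecidableEq n]
    (P : Matrix n n ℝ) (hP : P.IsHermitian) (i : n) :
    ∃ x : n → ℝ, x ⬝ᵥ x = 1 ∧ P *ᵥ x = hP.eigenvalues i • x := by
  refine ⟨⇑(hP.eigenvectorBasis i), ?_, hP.mulVec_eigenvectorBasis i⟩
  have h1 : ‖hP.eigenvectorBasis i‖ = 1 := hP.eigenvectorBasis.orthonormal.1 i
  have h2 : (inner ℝ (hP.eigenvectorBasis i) (hP.eigenvectorBasis i) : ℝ) = 1 := by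
    rw [real_inner_self_eq_norm_sq, h1]; norm_num
  rw [PiLp.inner_apply] at h2
  simpa [dotProduct, RCLike.inner_apply, starRingEnd_apply, sq] using h2

lemma specNorm_bdd {r s : ℕ} (M : Matrix (Fin r) (Fin s) ℝ) :
    BddAbove {c : ℝ | ∃ x : Fin s → ℝ, (∑ j, x j ^ 2) = 1 ∧
      c = Real.sqrt (∑ i, (M.mulVec x i) ^ 2)} := by
  refine ⟨frobNorm M, fun c hc => ?_⟩
  obtain ⟨x, hx, rfl⟩ := hc
  apply Real.sqrt_le_sqrt
  apply Finset.sum_le_sum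
  intro i _
  calc (M.mulVec x i) ^ 2 = (∑ j, M i j * x j) ^ 2 := rfl
    _ ≤ (∑ j, M i j ^ 2) * (∑ j, x j ^ 2) := Finset.sum_mul_sq_le_sq_mul_sq _ _ _
    _ = ∑ j, M i j ^ 2 := by rw [hx, mul_one]

lemma le_specNorm {r s : ℕ} (M : Matrix (Fin r) (Fin s) ℝ) (x : Fin s → ℝ)
    (hx : (∑ j, x j ^ 2) = 1) : Real.sqrt (∑ i, (M.mulVec x i) ^ 2) ≤ specNorm M :=
  le_csSup (specNorm_bdd M) ⟨x, hx, rfl⟩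

lemma specNorm_nonneg {r s : ℕ} (hs : 0 < s) (M : Matrix (Fin r) (Fin s) ℝ) :
    0 ≤ specNorm M := by
  refine le_trans (Real.sqrt_nonneg _) (le_specNorm M (fun j => if j = ⟨0, hs⟩ then 1 else 0) ?_)
  simp [Finset.sum_ite_eq']

end Helpers

/-- Simplified Davis–Kahan tangent theorem.  The spectral norm of the tangent of
the canonical angle matrix between two `p`-dimensional subspaces with orthonormal
bases `X` and `Xt` is `√(1 - c²)/c`, where `c` is the smallest singular value of
`Xᵀ * Xt` (the cosines of the canonical angles being the singular values). -/
theorem davis_kahan_tangent {r p : ℕ} (hp : 0 < p) (hpr : p ≤ r)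
    (A : Matrix (Fin r) (Fin r) ℝ) (hAsym : Aᵀ = A)
    (X : Matrix (Fin r) (Fin p) ℝ) (Y : Matrix (Fin r) (Fin (r - p)) ℝ)
    (hX : Xᵀ * X = 1) (hY : Yᵀ * Y = 1) (hXY : Xᵀ * Y = 0)
    (hcomplete : X * Xᵀ + Y * Yᵀ = 1)
    (hinv : ∃ M : Matrix (Fin p) (Fin p) ℝ, A * X = X * M)
    (Xt : Matrix (Fin r) (Fin p) ℝ) (hXt : Xtᵀ * Xt = 1)
    (R : Matrix (Fin r) (Fin p) ℝ)
    (hR : R = A * Xt - Xt * (Xtᵀ * A * Xt))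
    (α β δ : ℝ) (hδ : 0 < δ)
    (hin : ∀ (hH : (Xtᵀ * A * Xt).IsHermitian) (i : Fin p),
      hH.eigenvalues i ∈ Set.Icc α β)
    (hout : (∀ (hH : (Yᵀ * A * Y).IsHermitian) (i : Fin (r - p)),
        hH.eigenvalues i ≤ α - δ) ∨
      (∀ (hH : (Yᵀ * A * Y).IsHermitian) (i : Fin (r - p)),
        β + δ ≤ hH.eigenvalues i)) :
    ∀ τ : ℕ → ℝ, IsSingularValues (Xᵀ * Xt) τ →
      Real.sqrt (1 - τ (p - 1) ^ 2) / τ (p - 1) ≤ specNorm R / δ := by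
  intro τ hτ
  obtain ⟨M, hM⟩ := hinv
  obtain ⟨hτ1, hτ2, hτ3, hτ4⟩ := hτ
  -- matrix identities
  have hYX : Yᵀ * X = 0 := by
    have := congrArg Matrix.transpose hXY
    simpa using this
  have hWZ : (Xᵀ*Xt)ᵀ*(Xᵀ*Xt) + (Yᵀ*Xt)ᵀ*(Yᵀ*Xt) = 1 := by
    simp only [transpose_mul, transpose_transpose]
    rw [Matrix.mul_assoc, Matrix.mul_assoc, ← Matrix.mul_assoc X, ← Matrix.mul_assoc Y,
      ← Matrix.mul_add, ← Matrix.add_mul, hcomplete, Matrix.one_mul, hXt]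
  have hXA : Xᵀ * A = Mᵀ * Xᵀ := by
    calc Xᵀ * A = Xᵀ * Aᵀ := by rw [hAsym]
      _ = (A * X)ᵀ := (transpose_mul A X).symm
      _ = (X * M)ᵀ := by rw [hM]
      _ = Mᵀ * Xᵀ := transpose_mul X M
  have hXAY : Xᵀ * (A * Y) = 0 := by
    rw [← Matrix.mul_assoc, hXA, Matrix.mul_assoc, hXY, Matrix.mul_zero]
  have hAY : A * Y = Y * (Yᵀ * A * Y) := by
    calc A * Y = 1 * (A * Y) := (Matrix.one_mul _).symm
      _ = (X * Xᵀ + Y * Yᵀ) * (A * Y) := by rw [hcomplete]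
      _ = X * (Xᵀ * (A * Y)) + Y * (Yᵀ * (A * Y)) := by
          rw [Matrix.add_mul, Matrix.mul_assoc, Matrix.mul_assoc]
      _ = Y * (Yᵀ * A * Y) := by rw [hXAY, Matrix.mul_zero, zero_add, Matrix.mul_assoc]
  have hXtdec : Xt = X * (Xᵀ * Xt) + Y * (Yᵀ * Xt) := by
    rw [← Matrix.mul_assoc, ← Matrix.mul_assoc, ← Matrix.add_mul, hcomplete, Matrix.one_mul]
  have hAXt : A * Xt = X * (M * (Xᵀ * Xt)) + Y * ((Yᵀ * A * Y) * (Yᵀ * Xt)) := by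
    calc A * Xt = A * (X * (Xᵀ * Xt) + Y * (Yᵀ * Xt)) := by rw [← hXtdec]
      _ = (A * X) * (Xᵀ * Xt) + (A * Y) * (Yᵀ * Xt) := by
          rw [Matrix.mul_add, Matrix.mul_assoc, Matrix.mul_assoc]
      _ = _ := by rw [hM, hAY, Matrix.mul_assoc, Matrix.mul_assoc]
  have hHherm : (Xtᵀ * A * Xt).IsHermitian := by
    unfold Matrix.IsHermitian
    rw [conjTranspose_eq_transpose_of_trivial, transpose_mul, transpose_mul,
      transpose_transpose, hAsym, Matrix.mul_assoc]
  have hLherm : (Yᵀ * A * Y).IsHermitian := by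
    unfold Matrix.IsHermitian
    rw [conjTranspose_eq_transpose_of_trivial, transpose_mul, transpose_mul,
      transpose_transpose, hAsym, Matrix.mul_assoc]
  have hWherm : ((Xᵀ*Xt)ᵀ*(Xᵀ*Xt)).IsHermitian := by
    unfold Matrix.IsHermitian
    rw [conjTranspose_eq_transpose_of_trivial, transpose_mul, transpose_transpose]
  -- eigenvalue extraction
  have hmult := hτ4 hWherm
  have hmem : τ (p-1)^2 ∈ Multiset.map hWherm.eigenvalues Finset.univ.val := by
    rw [← hmult]
    exact Multiset.mem_map.2 ⟨(⟨p-1, by omega⟩ : Fin p), Finset.mem_univ_val _, rfl⟩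
  obtain ⟨j, hjmem, hj⟩ := Multiset.mem_map.1 hmem
  obtain ⟨x, hxunit, hxeig⟩ := exists_eigvec _ hWherm j
  rw [hj] at hxeig
  set c := τ (p-1) with hcdef
  clear_value c
  have hc0 : 0 ≤ c := by rw [hcdef]; exact hτ2 _
  rcases eq_or_lt_of_le hc0 with hc | hcpos
  · rw [← hc, div_zero]
    exact div_nonneg (specNorm_nonneg hp R) hδ.le
  -- main case
  set u : Fin p → ℝ := (Xᵀ*Xt) *ᵥ x with hudef
  set z : Fin (r-p) → ℝ := (Yᵀ*Xt) *ᵥ x with hzdef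
  clear_value u z
  have huu : u ⬝ᵥ u = c^2 := by
    rw [hudef, dp_mul, hxeig, dotProduct_smul, hxunit, smul_eq_mul, mul_one]
  have hZZ1 : ((Yᵀ*Xt)ᵀ*(Yᵀ*Xt)) *ᵥ x = x - c^2 • x := by
    have h := eq_sub_of_add_eq' hWZ
    rw [h, sub_mulVec, one_mulVec, hxeig]
  have hzz : z ⬝ᵥ z = 1 - c^2 := by
    rw [hzdef, dp_mul, hZZ1, dotProduct_sub, dotProduct_smul, hxunit, smul_eq_mul, mul_one]
  have hs2 : 0 ≤ 1 - c^2 := hzz ▸ dp_self_nonneg z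
  by_cases hczero : 1 - c^2 = 0
  · rw [hczero, Real.sqrt_zero, zero_div]
    exact div_nonneg (specNorm_nonneg hp R) hδ.le
  have hs2pos : 0 < 1 - c^2 := lt_of_le_of_ne hs2 (Ne.symm hczero)
  set s := Real.sqrt (1 - c^2) with hsdef
  have hssq : s^2 = 1 - c^2 := Real.sq_sqrt hs2
  have hspos' : 0 < Real.sqrt (1 - c^2) := Real.sqrt_pos.2 hs2pos
  have hspos : 0 < s := Real.sqrt_pos.2 hs2pos
  set g : Fin r → ℝ := (-(s/c^2)) • (X *ᵥ u) + (1/s) • (Y *ᵥ z) with hgdef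
  clear_value g
  -- dot product expansion lemmas
  have dXX : ∀ (a b : Fin p → ℝ), (X *ᵥ a) ⬝ᵥ (X *ᵥ b) = a ⬝ᵥ b := fun a b => by
    rw [dp_mul, hX, one_mulVec]
  have dYY : ∀ (a b : Fin (r-p) → ℝ), (Y *ᵥ a) ⬝ᵥ (Y *ᵥ b) = a ⬝ᵥ b := fun a b => by
    rw [dp_mul, hY, one_mulVec]
  have dXY : ∀ (a : Fin p → ℝ) (b : Fin (r-p) → ℝ), (X *ᵥ a) ⬝ᵥ (Y *ᵥ b) = 0 := fun a b => by
    rw [dp_mul, hXY, zero_mulVec, dotProduct_zero]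
  have dYX : ∀ (b : Fin (r-p) → ℝ) (a : Fin p → ℝ), (Y *ᵥ b) ⬝ᵥ (X *ᵥ a) = 0 := fun b a => by
    rw [dp_mul, hYX, zero_mulVec, dotProduct_zero]
  have hw1 : (A * Xt) *ᵥ x = X *ᵥ (M *ᵥ u) + Y *ᵥ ((Yᵀ*A*Y) *ᵥ z) := by
    rw [hudef, hzdef, hAXt, add_mulVec]
    simp only [mulVec_mulVec]
  have hXtx : Xt *ᵥ x = X *ᵥ u + Y *ᵥ z := by
    rw [hudef, hzdef]
    conv_lhs => rw [hXtdec]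
    rw [add_mulVec]
    simp only [mulVec_mulVec]
  set mu := u ⬝ᵥ (M *ᵥ u) with hmudef
  set lz := z ⬝ᵥ ((Yᵀ*A*Y) *ᵥ z) with hlzdef
  set xh := x ⬝ᵥ ((Xtᵀ*A*Xt) *ᵥ x) with hxhdef
  clear_value mu lz xh
  have hxh : xh = mu + lz := by
    have h0 : (Xtᵀ*A*Xt) *ᵥ x = Xtᵀ *ᵥ ((A*Xt) *ᵥ x) := by
      rw [mulVec_mulVec, Matrix.mul_assoc]
    rw [hxhdef, h0, dp_transpose, hXtx, hw1, add_dotProduct, dotProduct_add, dotProduct_add,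
      dXX, dXY, dYX, dYY, hmudef, hlzdef]
    ring
  -- g is orthogonal to range Xt
  have hWsymT : ((Xᵀ*Xt)ᵀ*(Xᵀ*Xt))ᵀ = (Xᵀ*Xt)ᵀ*(Xᵀ*Xt) := by
    rw [transpose_mul, transpose_transpose]
  have hZsymT : ((Yᵀ*Xt)ᵀ*(Yᵀ*Xt))ᵀ = (Yᵀ*Xt)ᵀ*(Yᵀ*Xt) := by
    rw [transpose_mul, transpose_transpose]
  have e1 : ∀ wv : Fin p → ℝ, u ⬝ᵥ ((Xᵀ*Xt) *ᵥ wv) = c^2 * (x ⬝ᵥ wv) := by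
    intro wv
    rw [hudef, dp_mul, ← hWsymT, dp_transpose, hxeig, smul_dotProduct, smul_eq_mul]
  have e2 : ∀ wv : Fin p → ℝ, z ⬝ᵥ ((Yᵀ*Xt) *ᵥ wv) = (1-c^2) * (x ⬝ᵥ wv) := by
    intro wv
    rw [hzdef, dp_mul, ← hZsymT, dp_transpose, hZZ1, sub_dotProduct, smul_dotProduct,
      smul_eq_mul]
    ring
  have hgXt : ∀ wv : Fin p → ℝ, g ⬝ᵥ (Xt *ᵥ wv) = 0 := by
    intro wv
    have hx1 : (X *ᵥ u) ⬝ᵥ (Xt *ᵥ wv) = c^2 * (x ⬝ᵥ wv) := by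
      rw [dp_mul]; exact e1 wv
    have hx2 : (Y *ᵥ z) ⬝ᵥ (Xt *ᵥ wv) = (1-c^2) * (x ⬝ᵥ wv) := by
      rw [dp_mul]; exact e2 wv
    rw [hgdef, add_dotProduct, smul_dotProduct, smul_dotProduct, hx1, hx2, smul_eq_mul,
      smul_eq_mul, ← hssq]
    field_simp
    ring
  have hgR : g ⬝ᵥ (R *ᵥ x) = -(s/c^2) * mu + (1/s) * lz := by
    rw [hR, sub_mulVec, dotProduct_sub]
    have h1 : g ⬝ᵥ ((Xt * (Xtᵀ*A*Xt)) *ᵥ x) = 0 := by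
      rw [← mulVec_mulVec]; exact hgXt _
    rw [h1, sub_zero, hw1, hgdef, add_dotProduct, smul_dotProduct, smul_dotProduct,
      dotProduct_add, dotProduct_add, dXX, dXY, dYX, dYY, smul_eq_mul, smul_eq_mul,
      hmudef, hlzdef]
    ring
  have hgg : g ⬝ᵥ g = 1/c^2 := by
    rw [hgdef, add_dotProduct, dotProduct_add, dotProduct_add, smul_dotProduct,
      smul_dotProduct, smul_dotProduct, smul_dotProduct, dotProduct_smul, dotProduct_smul,
      dotProduct_smul, dotProduct_smul, dXX, dXY, dYX, dYY, huu, hzz, ← hssq]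
    simp only [smul_eq_mul, mul_zero, smul_zero]
    field_simp
    linear_combination hssq
  -- Rayleigh bounds
  obtain ⟨wH, hwH0, hwHsum, hwHval⟩ := rayleigh _ hHherm x
  rw [hxunit] at hwHsum
  have hxh_le : xh ≤ β := by
    rw [hxhdef, hwHval]
    calc ∑ i, hHherm.eigenvalues i * wH i ≤ ∑ i, β * wH i :=
        Finset.sum_le_sum fun i _ => mul_le_mul_of_nonneg_right (hin hHherm i).2 (hwH0 i)
      _ = β := by rw [← Finset.mul_sum, hwHsum, mul_one]
  have hxh_ge : α ≤ xh := by
    rw [hxhdef, hwHval]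
    calc α = ∑ i, α * wH i := by rw [← Finset.mul_sum, hwHsum, mul_one]
      _ ≤ ∑ i, hHherm.eigenvalues i * wH i :=
        Finset.sum_le_sum fun i _ => mul_le_mul_of_nonneg_right (hin hHherm i).1 (hwH0 i)
  obtain ⟨wL, hwL0, hwLsum, hwLval⟩ := rayleigh _ hLherm z
  rw [hzz] at hwLsum
  -- Cauchy-Schwarz chain
  have hRx : Real.sqrt ((R *ᵥ x) ⬝ᵥ (R *ᵥ x)) ≤ specNorm R := by
    have h1 : (R *ᵥ x) ⬝ᵥ (R *ᵥ x) = ∑ i, (R *ᵥ x) i ^2 := by simp [dotProduct, sq]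
    rw [h1]
    exact le_specNorm R x (by simpa [dotProduct, sq] using hxunit)
  have hcs : |g ⬝ᵥ (R *ᵥ x)| ≤ (1/c) * specNorm R := by
    refine le_trans (dp_cs g (R *ᵥ x)) ?_
    have h1 : Real.sqrt (g ⬝ᵥ g) = 1/c := by
      rw [hgg, show (1:ℝ)/c^2 = (1/c)^2 by ring, Real.sqrt_sq (by positivity)]
    rw [h1]
    exact mul_le_mul_of_nonneg_left hRx (by positivity)
  -- lower bound on |g ⬝ᵥ Rx|
  have hmu_eq : mu = xh - lz := by linarith
  have hlow : δ * s / c^2 ≤ |g ⬝ᵥ (R *ᵥ x)| := by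
    rcases hout with hL | hL
    · have hlz : lz ≤ (α - δ) * (1 - c^2) := by
        rw [hlzdef, hwLval]
        calc ∑ i, hLherm.eigenvalues i * wL i ≤ ∑ i, (α-δ) * wL i :=
            Finset.sum_le_sum fun i _ => mul_le_mul_of_nonneg_right (hL hLherm i) (hwL0 i)
          _ = (α-δ)*(1-c^2) := by rw [← Finset.mul_sum, hwLsum]
      have hE : g ⬝ᵥ (R *ᵥ x) ≤ -(δ * s / c^2) := by
        rw [hgR, hmu_eq]
        have hk : (0:ℝ) < s/c^2 + 1/s := by positivity
        have h2 : (s/c^2 + 1/s) * lz ≤ (s/c^2 + 1/s) * ((α-δ)*(1-c^2)) :=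
          mul_le_mul_of_nonneg_left hlz hk.le
        have h3 : -(s/c^2) * (xh - lz) + (1/s) * lz
            = -(s/c^2) * xh + (s/c^2 + 1/s) * lz := by ring
        rw [h3]
        have h4 : -(s/c^2) * xh ≤ -(s/c^2) * α := by
          have h40 : (s/c^2) * α ≤ (s/c^2) * xh :=
            mul_le_mul_of_nonneg_left hxh_ge (by positivity)
          linarith
        have h5 : -(s/c^2) * α + (s/c^2 + 1/s) * ((α-δ)*(1-c^2)) = -(δ * s / c^2) := by
          rw [← hssq]
          field_simp
          linear_combination (α-δ) * hssq
        linarith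
      calc δ * s / c^2 ≤ -(g ⬝ᵥ (R *ᵥ x)) := by linarith
        _ ≤ |g ⬝ᵥ (R *ᵥ x)| := neg_le_abs _
    · have hlz : (β + δ) * (1 - c^2) ≤ lz := by
        rw [hlzdef, hwLval]
        calc (β+δ)*(1-c^2) = ∑ i, (β+δ) * wL i := by rw [← Finset.mul_sum, hwLsum]
          _ ≤ ∑ i, hLherm.eigenvalues i * wL i :=
            Finset.sum_le_sum fun i _ => mul_le_mul_of_nonneg_right (hL hLherm i) (hwL0 i)
      have hE : δ * s / c^2 ≤ g ⬝ᵥ (R *ᵥ x) := by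
        rw [hgR, hmu_eq]
        have hk : (0:ℝ) < s/c^2 + 1/s := by positivity
        have h2 : (s/c^2 + 1/s) * ((β+δ)*(1-c^2)) ≤ (s/c^2 + 1/s) * lz :=
          mul_le_mul_of_nonneg_left hlz hk.le
        have h3 : -(s/c^2) * (xh - lz) + (1/s) * lz
            = -(s/c^2) * xh + (s/c^2 + 1/s) * lz := by ring
        rw [h3]
        have h4 : -(s/c^2) * β ≤ -(s/c^2) * xh := by
          have h40 : (s/c^2) * xh ≤ (s/c^2) * β :=
            mul_le_mul_of_nonneg_left hxh_le (by positivity)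
          linarith
        have h5 : -(s/c^2) * β + (s/c^2 + 1/s) * ((β+δ)*(1-c^2)) = δ * s / c^2 := by
          rw [← hssq]
          field_simp
          linear_combination (β+δ) * hssq
        linarith
      exact le_trans hE (le_abs_self _)
  -- conclude
  have hfinal : δ * s / c^2 ≤ (1/c) * specNorm R := le_trans hlow hcs
  rw [div_le_div_iff₀ hcpos hδ]
  have hc2 : (0:ℝ) < c^2 := by positivity
  have := mul_le_mul_of_nonneg_left hfinal hc2.le
  have hl : c^2 * (δ * s / c^2) = δ * s := by field_simp
  have hr : c^2 * ((1/c) * specNorm R) = c * specNorm R := by field_simp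
  rw [hl, hr] at this
  linarith
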